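/- Suppose L : ℝ^d → ℝ is convex, C², with ∇²L(θ) ⪯ λI everywhere, a minimizer θ* with L(θ*) = L*, and ∇²L(θ*) ≻ 0. Run gradient descent copies θ_j^{(t+1)} = θ_j^{(t)} − η_j ∇L(θ_j^{(t)}) for j = 1,…,N with Bayesian-model-averaging weights a_j^{(t)} ∝ exp(−N_data ∑_{s≤t} L̂(θ_j^{(s)})) (log-loss weights), and define the mixture loss L(θ_Alrao^{(t)}) = (1/N_data)∑_i −log ∑_j a_j^{(t)} exp(−ℓ(C_{θ_j^{(t)}}(x_i), y_i)). If at least one η_j < 1/λ, then limsup_t L(θ_Alrao^{(t)}) ≤ L*. -/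

import Mathlib

open Filter Topology RealInnerProductSpace
section aux
variable {E : Type*} [NormedAddCommGroup E] [InnerProductSpace ℝ E] [CompleteSpace E]

lemma grad_inner (f : E → ℝ) (x v : E) :
    ⟪gradient f x, v⟫ = fderiv ℝ f x v :=
  InnerProductSpace.toDual_symm_apply

lemma hasDerivAt_comp_line {f : E → ℝ} (hf : Differentiable ℝ f) (x v : E) (t : ℝ) :
    HasDerivAt (fun s : ℝ => f (x + s • v)) ⟪gradient f (x + t • v), v⟫ t := by
  have h1 : HasDerivAt (fun s : ℝ => x + s • v) v t := by
    simpa using ((hasDerivAt_id t).smul_const v).const_add x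
  have h2 := (hf (x + t • v)).hasFDerivAt.comp_hasDerivAt t h1
  rw [grad_inner]; exact h2

lemma seg_ftc {f : E → ℝ} (hf : Differentiable ℝ f) (hg : Continuous (gradient f))
    (x v : E) :
    f (x + v) - f x = ∫ t in (0:ℝ)..1, ⟪gradient f (x + t • v), v⟫ := by
  have hcont : Continuous fun t : ℝ => ⟪gradient f (x + t • v), v⟫ :=
    (hg.comp (by continuity)).inner continuous_const
  have := intervalIntegral.integral_eq_sub_of_hasDerivAt
    (f := fun s : ℝ => f (x + s • v))
    (f' := fun t : ℝ => ⟪gradient f (x + t • v), v⟫) (a := 0) (b := 1)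
    (fun t _ => hasDerivAt_comp_line hf x v t) (hcont.intervalIntegrable 0 1)
  rw [this]; norm_num

/-- Descent lemma. -/
lemma descent_lemma {f : E → ℝ} {lam : ℝ} (hf : Differentiable ℝ f)
    (hlip : LipschitzWith (Real.toNNReal lam) (gradient f)) (hlam : 0 ≤ lam) (x v : E) :
    f (x + v) ≤ f x + ⟪gradient f x, v⟫ + lam / 2 * ‖v‖ ^ 2 := by
  have hg : Continuous (gradient f) := hlip.continuous
  have hI : Continuous fun t : ℝ => ⟪gradient f (x + t • v), v⟫ :=
    (hg.comp (by continuity)).inner continuous_const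
  have key := seg_ftc hf hg x v
  have hmono : (∫ t in (0:ℝ)..1, ⟪gradient f (x + t • v), v⟫)
      ≤ ∫ t in (0:ℝ)..1, (⟪gradient f x, v⟫ + lam * t * ‖v‖ ^ 2) := by
    apply intervalIntegral.integral_mono_on zero_le_one
      (hI.intervalIntegrable 0 1)
      ((by fun_prop : Continuous fun t : ℝ => ⟪gradient f x, v⟫ + lam * t * ‖v‖ ^ 2).intervalIntegrable 0 1)
    intro t ht
    have h1 : ⟪gradient f (x + t • v) - gradient f x, v⟫
        ≤ ‖gradient f (x + t • v) - gradient f x‖ * ‖v‖ := real_inner_le_norm _ _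
    have h2 : ‖gradient f (x + t • v) - gradient f x‖ ≤ lam * (t * ‖v‖) := by
      have := hlip.dist_le_mul (x + t • v) x
      rw [dist_eq_norm] at this
      simpa [Real.coe_toNNReal lam hlam, norm_smul, abs_of_nonneg ht.1,
        dist_eq_norm] using this
    have h3 : ⟪gradient f (x + t • v), v⟫ - ⟪gradient f x, v⟫ ≤ lam * t * ‖v‖ ^ 2 := by
      rw [← inner_sub_left]
      calc _ ≤ ‖gradient f (x + t • v) - gradient f x‖ * ‖v‖ := h1
        _ ≤ lam * (t * ‖v‖) * ‖v‖ := by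
            apply mul_le_mul_of_nonneg_right h2 (norm_nonneg _)
        _ = lam * t * ‖v‖ ^ 2 := by ring
    linarith
  have hint : (∫ t in (0:ℝ)..1, (⟪gradient f x, v⟫ + lam * t * ‖v‖ ^ 2))
      = ⟪gradient f x, v⟫ + lam / 2 * ‖v‖ ^ 2 := by
    rw [intervalIntegral.integral_add (intervalIntegrable_const)
      ((by fun_prop : Continuous fun t : ℝ => lam * t * ‖v‖ ^ 2).intervalIntegrable 0 1)]
    simp only [intervalIntegral.integral_const, smul_eq_mul]
    have : (∫ t in (0:ℝ)..1, lam * t * ‖v‖ ^ 2)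
        = lam * ‖v‖ ^ 2 * ∫ t in (0:ℝ)..1, t := by
      rw [← intervalIntegral.integral_const_mul]
      congr 1; ext t; ring
    rw [this, integral_id]
    ring
  linarith [key.le.trans (hmono.trans hint.le)]

/-- Gradient inequality for convex functions. -/
lemma convex_lower {f : E → ℝ} (hconv : ConvexOn ℝ Set.univ f)
    (hf : Differentiable ℝ f) (x v : E) :
    f x + ⟪gradient f x, v⟫ ≤ f (x + v) := by
  have hd : HasDerivAt (fun s : ℝ => f (x + s • v)) ⟪gradient f x, v⟫ 0 := by
    have := hasDerivAt_comp_line hf x v (0:ℝ)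
    rwa [zero_smul, add_zero] at this
  have hslope := hasDerivAt_iff_tendsto_slope.1 hd
  have hle : ∀ᶠ t in 𝓝[>] (0:ℝ), slope (fun s : ℝ => f (x + s • v)) 0 t ≤ f (x + v) - f x := by
    filter_upwards [Ioo_mem_nhdsGT_of_mem (by norm_num : (0:ℝ) ∈ Set.Ico 0 1)] with t ht
    have hcomb := hconv.2 (Set.mem_univ x) (Set.mem_univ (x + v))
      (by linarith [ht.1, ht.2] : (0:ℝ) ≤ 1 - t) ht.1.le (by ring)
    have hpt : (1 - t) • x + t • (x + v) = x + t • v := by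
      rw [smul_add]; module
    rw [hpt] at hcomb
    rw [slope_def_field]
    simp only [zero_smul, add_zero, sub_zero]
    rw [div_le_iff₀ ht.1]
    calc f (x + t • v) - f x ≤ (1 - t) * f x + t * f (x + v) - f x := by
          simpa [smul_eq_mul] using sub_le_sub_right hcomb (f x)
      _ = (f (x + v) - f x) * t := by ring
  have := le_of_tendsto (hslope.mono_left (nhdsWithin_mono _ (by
    intro t ht; exact ne_of_gt ht))) hle
  linarith
/-- One-sided co-coercivity inequality. -/
lemma coco_half {f : E → ℝ} {lam : ℝ} (hconv : ConvexOn ℝ Set.univ f)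
    (hf : Differentiable ℝ f)
    (hlip : LipschitzWith (Real.toNNReal lam) (gradient f)) (hlam : 0 < lam) (x y : E) :
    f x ≤ f y + ⟪gradient f x, x - y⟫ - 1 / (2 * lam) * ‖gradient f y - gradient f x‖ ^ 2 := by
  set u := gradient f y - gradient f x with hu
  set w := y - (1 / lam) • u with hw
  have hC : f x + ⟪gradient f x, w - x⟫ ≤ f w := by
    have := convex_lower hconv hf x (w - x)
    rwa [add_sub_cancel] at this
  have hB : f w ≤ f y + ⟪gradient f y, -(1 / lam) • u⟫ + lam / 2 * ‖-(1 / lam) • u‖ ^ 2 := by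
    have := descent_lemma hf hlip hlam.le y (-(1 / lam) • u)
    have hyw : y + -(1 / lam) • u = w := by rw [hw]; module
    rwa [hyw] at this
  have e1 : ⟪gradient f x, w - x⟫ = ⟪gradient f x, y - x⟫ - (1/lam) * ⟪gradient f x, u⟫ := by
    rw [hw]; rw [show y - (1/lam) • u - x = (y - x) + (-(1/lam)) • u by module]
    rw [inner_add_right, real_inner_smul_right]; ring
  have e2 : ⟪gradient f y, -(1 / lam) • u⟫ = -(1/lam) * ⟪gradient f y, u⟫ := by
    rw [real_inner_smul_right]
  have e3 : lam / 2 * ‖-(1 / lam) • u‖ ^ 2 = 1 / (2 * lam) * ‖u‖ ^ 2 := by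
    rw [norm_smul, Real.norm_eq_abs, abs_neg, abs_of_nonneg (by positivity : (0:ℝ) ≤ 1/lam)]
    field_simp
  have e4 : ⟪gradient f y, u⟫ - ⟪gradient f x, u⟫ = ‖u‖ ^ 2 := by
    rw [← inner_sub_left, ← hu, real_inner_self_eq_norm_sq]
  have hinner : ⟪gradient f x, x - y⟫ = -⟪gradient f x, y - x⟫ := by
    rw [← inner_neg_right]; congr 1; module
  rw [e1] at hC; rw [e2, e3] at hB
  rw [hinner]
  have e5 : 1/lam * ‖u‖^2 - 1/(2*lam) * ‖u‖^2 = 1/(2*lam) * ‖u‖^2 := by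
    field_simp; ring
  have e6 : 1/lam * ⟪gradient f y, u⟫ - 1/lam * ⟪gradient f x, u⟫ = 1/lam * ‖u‖^2 := by
    rw [← mul_sub, e4]
  linarith [hC, hB, e5, e6]

/-- Co-coercivity of the gradient of a convex function with Lipschitz gradient. -/
lemma cocoercive {f : E → ℝ} {lam : ℝ} (hconv : ConvexOn ℝ Set.univ f)
    (hf : Differentiable ℝ f)
    (hlip : LipschitzWith (Real.toNNReal lam) (gradient f)) (hlam : 0 < lam) (x y : E) :
    1 / lam * ‖gradient f y - gradient f x‖ ^ 2 ≤ ⟪gradient f y - gradient f x, y - x⟫ := by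
  have h1 := coco_half hconv hf hlip hlam x y
  have h2 := coco_half hconv hf hlip hlam y x
  have e0 : ‖gradient f x - gradient f y‖ = ‖gradient f y - gradient f x‖ := norm_sub_rev _ _
  rw [e0] at h2
  have e1 : ⟪gradient f y - gradient f x, y - x⟫
      = ⟪gradient f y, y - x⟫ + ⟪gradient f x, x - y⟫ := by
    rw [inner_sub_left]
    have : ⟪gradient f x, x - y⟫ = -⟪gradient f x, y - x⟫ := by
      rw [← inner_neg_right]; congr 1; module
    rw [this]; ring
  rw [e1]
  have e2 : 1/lam * ‖gradient f y - gradient f x‖^2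
      = 2 * (1/(2*lam) * ‖gradient f y - gradient f x‖^2) := by field_simp
  linarith [h1, h2]
lemma grad_ftc {f : E → ℝ} (hg1 : ContDiff ℝ 1 (gradient f)) (x v : E) :
    ⟪gradient f (x + v) - gradient f x, v⟫ =
      ∫ t in (0:ℝ)..1, ⟪(fderiv ℝ (gradient f) (x + t • v)) v, v⟫ := by
  have hgd : Differentiable ℝ (gradient f) := hg1.differentiable one_ne_zero
  have hHcont : Continuous (fderiv ℝ (gradient f)) := hg1.continuous_fderiv one_ne_zero
  have hline : ∀ t : ℝ, HasDerivAt (fun s : ℝ => x + s • v) v t := fun t => by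
    simpa using ((hasDerivAt_id t).smul_const v).const_add x
  have hF : ∀ t : ℝ, HasDerivAt (fun s : ℝ => ⟪v, gradient f (x + s • v)⟫)
      ⟪v, (fderiv ℝ (gradient f) (x + t • v)) v⟫ t := by
    intro t
    have h1 : HasFDerivAt (gradient f) (fderiv ℝ (gradient f) (x + t • v)) (x + t • v) :=
      (hgd _).hasFDerivAt
    have h2 := ((innerSL ℝ v).hasFDerivAt.comp (x + t • v) h1).comp_hasDerivAt t (hline t)
    exact h2
  have hcont : Continuous fun t : ℝ => ⟪v, (fderiv ℝ (gradient f) (x + t • v)) v⟫ := by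
    apply continuous_const.inner
    exact (ContinuousLinearMap.apply ℝ E v).continuous.comp (hHcont.comp (by continuity))
  have key := intervalIntegral.integral_eq_sub_of_hasDerivAt
    (f := fun s : ℝ => ⟪v, gradient f (x + s • v)⟫)
    (f' := fun t : ℝ => ⟪v, (fderiv ℝ (gradient f) (x + t • v)) v⟫) (a := 0) (b := 1)
    (fun t _ => hF t) (hcont.intervalIntegrable 0 1)
  have e : ∀ t : ℝ, ⟪v, (fderiv ℝ (gradient f) (x + t • v)) v⟫
      = ⟪(fderiv ℝ (gradient f) (x + t • v)) v, v⟫ := fun t => real_inner_comm _ _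
  simp only [e] at key
  rw [key]
  simp only [one_smul, zero_smul, add_zero]
  rw [inner_sub_left, real_inner_comm v, real_inner_comm v]

lemma seg_mem_ball {z x y : E} {r : ℝ} (hx : x ∈ Metric.closedBall z r)
    (hy : y ∈ Metric.closedBall z r) {t : ℝ} (ht : t ∈ Set.Icc (0:ℝ) 1) :
    x + t • (y - x) ∈ Metric.closedBall z r := by
  have := (convex_closedBall z r) hx hy (by linarith [ht.2] : (0:ℝ) ≤ 1 - t) ht.1 (by ring)
  have he : (1 - t) • x + t • y = x + t • (y - x) := by module
  rwa [he] at this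

lemma strong_mono_ball {f : E → ℝ} {mu r : ℝ} (hg1 : ContDiff ℝ 1 (gradient f))
    (z : E) (hball : ∀ p ∈ Metric.closedBall z r, ∀ w : E,
      mu * ‖w‖ ^ 2 ≤ ⟪(fderiv ℝ (gradient f) p) w, w⟫)
    (x y : E) (hx : x ∈ Metric.closedBall z r) (hy : y ∈ Metric.closedBall z r) :
    mu * ‖y - x‖ ^ 2 ≤ ⟪gradient f y - gradient f x, y - x⟫ := by
  have hHcont : Continuous (fderiv ℝ (gradient f)) := hg1.continuous_fderiv one_ne_zero
  have key := grad_ftc hg1 x (y - x)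
  rw [add_sub_cancel] at key
  rw [key]
  have hcont : Continuous fun t : ℝ => ⟪(fderiv ℝ (gradient f) (x + t • (y - x))) (y - x), y - x⟫ := by
    apply Continuous.inner _ continuous_const
    exact (ContinuousLinearMap.apply ℝ E (y - x)).continuous.comp (hHcont.comp (by continuity))
  calc mu * ‖y - x‖ ^ 2 = ∫ _ in (0:ℝ)..1, mu * ‖y - x‖ ^ 2 := by simp
    _ ≤ _ := by
        apply intervalIntegral.integral_mono_on zero_le_one
          (intervalIntegrable_const) (hcont.intervalIntegrable 0 1)
        intro t ht
        exact hball _ (seg_mem_ball hx hy ht) (y - x)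

lemma sc_ineq {f : E → ℝ} {mu r : ℝ} (hf : Differentiable ℝ f)
    (hg1 : ContDiff ℝ 1 (gradient f)) (hmu : 0 ≤ mu)
    (z : E) (hball : ∀ p ∈ Metric.closedBall z r, ∀ w : E,
      mu * ‖w‖ ^ 2 ≤ ⟪(fderiv ℝ (gradient f) p) w, w⟫)
    (x y : E) (hx : x ∈ Metric.closedBall z r) (hy : y ∈ Metric.closedBall z r) :
    f x + ⟪gradient f x, y - x⟫ + mu / 2 * ‖y - x‖ ^ 2 ≤ f y := by
  have hg : Continuous (gradient f) := hg1.continuous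
  have key := seg_ftc hf hg x (y - x)
  rw [add_sub_cancel] at key
  set v := y - x with hv
  have hlow : ∀ t ∈ Set.Icc (0:ℝ) 1,
      ⟪gradient f x, v⟫ + mu * t * ‖v‖ ^ 2 ≤ ⟪gradient f (x + t • v), v⟫ := by
    intro t ht
    rcases eq_or_lt_of_le ht.1 with h0 | h0
    · simp [← h0]
    · have hmem : x + t • v ∈ Metric.closedBall z r := seg_mem_ball hx hy ht
      have := strong_mono_ball hg1 z hball x (x + t • v) hx hmem
      rw [add_sub_cancel_left] at this
      have e1 : ‖t • v‖ ^ 2 = t ^ 2 * ‖v‖ ^ 2 := by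
        rw [norm_smul, Real.norm_eq_abs, mul_pow, sq_abs]
      have e2 : ⟪gradient f (x + t • v) - gradient f x, t • v⟫
          = t * (⟪gradient f (x + t • v), v⟫ - ⟪gradient f x, v⟫) := by
        rw [real_inner_smul_right, inner_sub_left]
      rw [e1, e2] at this
      nlinarith [this, h0]
  have hcont : Continuous fun t : ℝ => ⟪gradient f (x + t • v), v⟫ :=
    (hg.comp (by continuity)).inner continuous_const
  have hmono : (∫ t in (0:ℝ)..1, (⟪gradient f x, v⟫ + mu * t * ‖v‖ ^ 2))
      ≤ ∫ t in (0:ℝ)..1, ⟪gradient f (x + t • v), v⟫ := by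
    apply intervalIntegral.integral_mono_on zero_le_one
      ((by fun_prop : Continuous fun t : ℝ => ⟪gradient f x, v⟫ + mu * t * ‖v‖ ^ 2).intervalIntegrable 0 1)
      (hcont.intervalIntegrable 0 1) hlow
  have hint : (∫ t in (0:ℝ)..1, (⟪gradient f x, v⟫ + mu * t * ‖v‖ ^ 2))
      = ⟪gradient f x, v⟫ + mu / 2 * ‖v‖ ^ 2 := by
    rw [intervalIntegral.integral_add (intervalIntegrable_const)
      ((by fun_prop : Continuous fun t : ℝ => mu * t * ‖v‖ ^ 2).intervalIntegrable 0 1)]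
    simp only [intervalIntegral.integral_const, smul_eq_mul]
    have : (∫ t in (0:ℝ)..1, mu * t * ‖v‖ ^ 2)
        = mu * ‖v‖ ^ 2 * ∫ t in (0:ℝ)..1, t := by
      rw [← intervalIntegral.integral_const_mul]
      congr 1; ext t; ring
    rw [this, integral_id]; ring
  rw [hint] at hmono
  linarith [key, hmono]
lemma posdef_bound [FiniteDimensional ℝ E] [Nontrivial E]
    (H : E →L[ℝ] E) (hpos : ∀ v : E, v ≠ 0 → 0 < ⟪H v, v⟫) :
    ∃ mu : ℝ, 0 < mu ∧ ∀ v : E, mu * ‖v‖ ^ 2 ≤ ⟪H v, v⟫ := by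
  have hq : Continuous fun v : E => ⟪H v, v⟫ := H.continuous.inner continuous_id
  have hsph : (Metric.sphere (0:E) 1).Nonempty := NormedSpace.sphere_nonempty.mpr zero_le_one
  obtain ⟨v0, hv0, hminq⟩ := (isCompact_sphere (0:E) 1).exists_isMinOn hsph hq.continuousOn
  have hv0n : ‖v0‖ = 1 := by simpa using hv0
  have hv0ne : v0 ≠ 0 := by intro h; rw [h] at hv0n; simp at hv0n
  refine ⟨⟪H v0, v0⟫, hpos v0 hv0ne, ?_⟩
  intro v
  rcases eq_or_ne v 0 with rfl | hv
  · simp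
  · have hnv : ‖v‖ ≠ 0 := norm_ne_zero_iff.2 hv
    set u := ‖v‖⁻¹ • v with hu
    have hun : u ∈ Metric.sphere (0:E) 1 := by
      simp only [mem_sphere_iff_norm, sub_zero, hu, norm_smul, norm_inv, norm_norm]
      field_simp
    have hle : ⟪H v0, v0⟫ ≤ ⟪H u, u⟫ := hminq hun
    have hvu : v = ‖v‖ • u := by rw [hu, smul_smul, mul_inv_cancel₀ hnv, one_smul]
    have hquad : ⟪H v, v⟫ = ‖v‖ ^ 2 * ⟪H u, u⟫ := by
      conv_lhs => rw [hvu]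
      rw [map_smul, real_inner_smul_left, real_inner_smul_right]
      ring
    rw [hquad]
    nlinarith [sq_nonneg ‖v‖, hle, hpos v0 hv0ne]

lemma hessian_ball_bound {f : E → ℝ} {mu : ℝ} (hg1 : ContDiff ℝ 1 (gradient f))
    (z : E) (hmu : 0 < mu)
    (hz : ∀ w : E, mu * ‖w‖ ^ 2 ≤ ⟪(fderiv ℝ (gradient f) z) w, w⟫) :
    ∃ r : ℝ, 0 < r ∧ ∀ p ∈ Metric.closedBall z r, ∀ w : E,
      mu / 2 * ‖w‖ ^ 2 ≤ ⟪(fderiv ℝ (gradient f) p) w, w⟫ := by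
  have hHcont : Continuous (fderiv ℝ (gradient f)) := hg1.continuous_fderiv one_ne_zero
  obtain ⟨δ, hδ, hcl⟩ := Metric.continuousAt_iff.1 hHcont.continuousAt (mu/2) (by positivity)
  refine ⟨δ/2, by positivity, ?_⟩
  intro p hp w
  have hdist : dist p z < δ := lt_of_le_of_lt (Metric.mem_closedBall.1 hp) (by linarith)
  have hnorm : ‖fderiv ℝ (gradient f) p - fderiv ℝ (gradient f) z‖ < mu/2 := by
    have := hcl hdist
    rwa [dist_eq_norm] at this
  have happ : ‖(fderiv ℝ (gradient f) p - fderiv ℝ (gradient f) z) w‖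
      ≤ ‖fderiv ℝ (gradient f) p - fderiv ℝ (gradient f) z‖ * ‖w‖ :=
    ContinuousLinearMap.le_opNorm _ _
  have hin : -(mu/2 * ‖w‖^2) ≤ ⟪(fderiv ℝ (gradient f) p - fderiv ℝ (gradient f) z) w, w⟫ := by
    have h1 : |⟪(fderiv ℝ (gradient f) p - fderiv ℝ (gradient f) z) w, w⟫|
        ≤ ‖(fderiv ℝ (gradient f) p - fderiv ℝ (gradient f) z) w‖ * ‖w‖ :=
      abs_real_inner_le_norm _ _
    have h2 : ‖(fderiv ℝ (gradient f) p - fderiv ℝ (gradient f) z) w‖ * ‖w‖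
        ≤ mu/2 * ‖w‖^2 := by
      calc _ ≤ (‖fderiv ℝ (gradient f) p - fderiv ℝ (gradient f) z‖ * ‖w‖) * ‖w‖ :=
              mul_le_mul_of_nonneg_right happ (norm_nonneg _)
        _ ≤ (mu/2 * ‖w‖) * ‖w‖ := by
              have := mul_le_mul_of_nonneg_right hnorm.le (norm_nonneg w)
              exact mul_le_mul_of_nonneg_right this (norm_nonneg w)
        _ = mu/2 * ‖w‖^2 := by ring
    linarith [neg_abs_le ⟪(fderiv ℝ (gradient f) p - fderiv ℝ (gradient f) z) w, w⟫]
  have hsplit : ⟪(fderiv ℝ (gradient f) p) w, w⟫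
      = ⟪(fderiv ℝ (gradient f) z) w, w⟫
        + ⟪(fderiv ℝ (gradient f) p - fderiv ℝ (gradient f) z) w, w⟫ := by
    rw [ContinuousLinearMap.sub_apply, inner_sub_left]; ring
  have := hz w
  rw [hsplit]
  linarith
lemma geom_helper {q : ℝ} (h0 : 0 ≤ q) (h1 : q < 1) (T : ℕ) :
    ∑ k ∈ Finset.range T, q^k ≤ 1/(1-q) := by
  have h1q : 0 < 1 - q := by linarith
  rw [geom_sum_eq (ne_of_lt h1)]
  have e : (q^T - 1)/(q - 1) = (1 - q^T)/(1-q) := by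
    rw [← neg_div_neg_eq]; ring_nf
  rw [e, div_le_div_iff₀ h1q h1q]
  nlinarith [pow_nonneg h0 T]

lemma pl_helper {X I G n mu : ℝ} (hmu : 0 < mu) (hG : 0 ≤ G)
    (hsc : X + I + mu/2*n^2 ≤ 0) (hi : -(G*n) ≤ I) : 2*mu*X ≤ G^2 := by
  nlinarith [sq_nonneg (G - mu*n)]

lemma mono_helper {mu mu' X G2 : ℝ} (h1 : 2*mu*X ≤ G2) (hle : mu' ≤ mu) (hX : 0 ≤ X) :
    2*mu'*X ≤ G2 := by nlinarith

lemma pl_step_helper {Lnew Lold Lst G2 e mu' : ℝ}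
    (h3 : Lnew ≤ Lold - e/2*G2) (h4 : e/2*(2*mu'*(Lold - Lst)) ≤ e/2*G2) :
    Lnew - Lst ≤ (1 - e*mu')*(Lold - Lst) := by nlinarith

lemma gd_summable [FiniteDimensional ℝ E] [Nontrivial E]
    {L : E → ℝ} (hconv : ConvexOn ℝ Set.univ L) (hC2 : ContDiff ℝ 2 L)
    {lam : ℝ} (hlam : 0 < lam) (hlip : LipschitzWith (Real.toNNReal lam) (gradient L))
    {θstar : E} (hmin : ∀ p, L θstar ≤ L p)
    (hposdef : ∀ v : E, v ≠ 0 → 0 < ⟪(fderiv ℝ (gradient L) θstar) v, v⟫)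
    {e : ℝ} (he0 : 0 < e) (he1 : e < 1 / lam)
    (x : ℕ → E) (hstep : ∀ t, x (t + 1) = x t - e • gradient L (x t)) :
    ∃ C : ℝ, ∀ T : ℕ, ∑ s ∈ Finset.range T, (L (x s) - L θstar) ≤ C := by
  have hf : Differentiable ℝ L := hC2.differentiable (by norm_num)
  have helam : e * lam < 1 := by
    calc e * lam < (1/lam) * lam := mul_lt_mul_of_pos_right he1 hlam
      _ = 1 := by field_simp
  have hg1 : ContDiff ℝ 1 (gradient L) := by
    have h1 : ContDiff ℝ 1 (fderiv ℝ L) := hC2.fderiv_right (by norm_num)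
    have : gradient L = fun p => (InnerProductSpace.toDual ℝ E).symm (fderiv ℝ L p) := rfl
    rw [this]
    exact (InnerProductSpace.toDual ℝ E).symm.contDiff.comp h1
  have hgrad0 : gradient L θstar = 0 := by
    have hloc : IsLocalMin L θstar := Filter.Eventually.of_forall hmin
    have : fderiv ℝ L θstar = 0 := hloc.fderiv_eq_zero
    show (InnerProductSpace.toDual ℝ E).symm (fderiv ℝ L θstar) = 0
    rw [this, map_zero]
  obtain ⟨mu0, hmu0, hbound⟩ := posdef_bound (fderiv ℝ (gradient L) θstar) hposdef
  obtain ⟨r, hr, hball⟩ := hessian_ball_bound hg1 θstar hmu0 hbound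
  set mu := mu0 / 2 with hmu_def
  have hmu : 0 < mu := by positivity
  -- descent along the iterates
  have hdesc : ∀ t, L (x (t+1)) ≤ L (x t) - e/2 * ‖gradient L (x t)‖^2 := by
    intro t
    have hv := descent_lemma hf hlip hlam.le (x t) (-(e • gradient L (x t)))
    have hx1 : x t + -(e • gradient L (x t)) = x (t+1) := by rw [hstep t]; module
    rw [hx1] at hv
    have e1 : ⟪gradient L (x t), -(e • gradient L (x t))⟫
        = -(e * ‖gradient L (x t)‖^2) := by
      rw [inner_neg_right, real_inner_smul_right, real_inner_self_eq_norm_sq]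
    have e2 : ‖-(e • gradient L (x t))‖^2 = e^2 * ‖gradient L (x t)‖^2 := by
      rw [norm_neg, norm_smul, Real.norm_eq_abs, mul_pow, sq_abs]
    rw [e1, e2] at hv
    nlinarith [sq_nonneg ‖gradient L (x t)‖, hv, helam, he0, sq_nonneg (e * ‖gradient L (x t)‖)]
  have hLmono : ∀ t, L (x (t+1)) ≤ L (x t) := fun t =>
    (hdesc t).trans (by nlinarith [sq_nonneg ‖gradient L (x t)‖, he0])
  -- distances nonincreasing
  have hdist : ∀ t, ‖x (t+1) - θstar‖ ≤ ‖x t - θstar‖ := by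
    intro t
    have hco := cocoercive hconv hf hlip hlam θstar (x t)
    rw [hgrad0, sub_zero] at hco
    have hx1 : x (t+1) - θstar = (x t - θstar) - e • gradient L (x t) := by
      rw [hstep t]; module
    have hsq : ‖x (t+1) - θstar‖^2 ≤ ‖x t - θstar‖^2 := by
      rw [hx1, norm_sub_sq_real]
      have e1 : ⟪x t - θstar, e • gradient L (x t)⟫
          = e * ⟪gradient L (x t), x t - θstar⟫ := by
        rw [real_inner_smul_right, real_inner_comm]
      have e2 : ‖e • gradient L (x t)‖^2 = e^2 * ‖gradient L (x t)‖^2 := by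
        rw [norm_smul, Real.norm_eq_abs, mul_pow, sq_abs]
      rw [e1, e2]
      have h3 : 1/lam * ‖gradient L (x t)‖^2 ≤ ⟪gradient L (x t), x t - θstar⟫ := hco
      have h4 : e * (1/lam) ≥ e * e := by
        have : e ≤ 1/lam := he1.le
        nlinarith [he0]
      nlinarith [sq_nonneg ‖gradient L (x t)‖, he0, h3]
    exact (pow_le_pow_iff_left₀ (norm_nonneg _) (norm_nonneg _) two_ne_zero).1 hsq
  have hR : ∀ t, ‖x t - θstar‖ ≤ ‖x 0 - θstar‖ := by
    intro t; induction t with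
    | zero => exact le_refl _
    | succ n ih => exact (hdist n).trans ih
  -- gradient norms square-summable
  have hsumgrad : ∀ T, ∑ t ∈ Finset.range T, e/2 * ‖gradient L (x t)‖^2
      ≤ L (x 0) - L θstar := by
    intro T
    have key : ∀ T, ∑ t ∈ Finset.range T, e/2 * ‖gradient L (x t)‖^2
        ≤ L (x 0) - L (x T) := by
      intro T; induction T with
      | zero => simp
      | succ n ih =>
          rw [Finset.sum_range_succ]
          have := hdesc n
          linarith
    exact (key T).trans (by linarith [hmin (x T)])
  have hsummable : Summable (fun t => ‖gradient L (x t)‖^2) := by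
    apply summable_of_sum_range_le (fun n => sq_nonneg _) (c := (L (x 0) - L θstar) / (e/2))
    intro n
    rw [le_div_iff₀ (by positivity : (0:ℝ) < e/2)]
    calc (∑ i ∈ Finset.range n, ‖gradient L (x i)‖^2) * (e/2)
        = ∑ i ∈ Finset.range n, e/2 * ‖gradient L (x i)‖^2 := by
          rw [Finset.sum_mul]; exact Finset.sum_congr rfl fun i _ => by ring
      _ ≤ L (x 0) - L θstar := hsumgrad n
  have hgsq0 : Tendsto (fun t => ‖gradient L (x t)‖^2) atTop (𝓝 0) :=
    hsummable.tendsto_atTop_zero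
  have hgto0 : Tendsto (fun t => ‖gradient L (x t)‖) atTop (𝓝 0) := by
    have h := (Real.continuous_sqrt.tendsto 0).comp hgsq0
    have heq : ((fun y => Real.sqrt y) ∘ fun t => ‖gradient L (x t)‖^2)
        = fun t => ‖gradient L (x t)‖ := by
      funext t; simp [Function.comp, Real.sqrt_sq (norm_nonneg _)]
    rwa [heq, Real.sqrt_zero] at h
  set R := ‖x 0 - θstar‖ with hRdef
  have hLub : ∀ t, L (x t) ≤ L θstar + ‖gradient L (x t)‖ * R := by
    intro t
    have hcl := convex_lower hconv hf (x t) (θstar - x t)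
    rw [add_sub_cancel] at hcl
    have h1 : -(‖gradient L (x t)‖ * ‖θstar - x t‖) ≤ ⟪gradient L (x t), θstar - x t⟫ := by
      have := abs_real_inner_le_norm (gradient L (x t)) (θstar - x t)
      linarith [neg_abs_le ⟪gradient L (x t), θstar - x t⟫]
    have h2 : ‖θstar - x t‖ ≤ R := by rw [norm_sub_rev]; exact hR t
    have h3 : ‖gradient L (x t)‖ * ‖θstar - x t‖ ≤ ‖gradient L (x t)‖ * R :=
      mul_le_mul_of_nonneg_left h2 (norm_nonneg _)
    linarith
  have hLto : Tendsto (fun t => L (x t)) atTop (𝓝 (L θstar)) := by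
    apply tendsto_of_tendsto_of_tendsto_of_le_of_le tendsto_const_nhds ?_
      (fun t => hmin (x t)) (fun t => hLub t)
    have : Tendsto (fun t => L θstar + ‖gradient L (x t)‖ * R) atTop
        (𝓝 (L θstar + 0 * R)) := tendsto_const_nhds.add (hgto0.mul_const R)
    simpa using this
  have houts : ∀ p : E, r ≤ ‖p - θstar‖ → L θstar + mu/2 * r^2 ≤ L p := by
    intro p hp
    have hppos : 0 < ‖p - θstar‖ := lt_of_lt_of_le hr hp
    have hpne : ‖p - θstar‖ ≠ 0 := ne_of_gt hppos
    set s := r / ‖p - θstar‖ with hs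
    have hs0 : 0 < s := div_pos hr hppos
    have hs1 : s ≤ 1 := (div_le_one hppos).2 hp
    set w := θstar + s • (p - θstar) with hwdef
    have hwn : ‖w - θstar‖ = r := by
      have h : w - θstar = s • (p - θstar) := by rw [hwdef]; module
      rw [h, norm_smul, Real.norm_eq_abs, abs_of_pos hs0, hs, div_mul_cancel₀ _ hpne]
    have hwball : w ∈ Metric.closedBall θstar r := by
      rw [Metric.mem_closedBall, dist_eq_norm, hwn]
    have hsc := sc_ineq hf hg1 hmu.le θstar hball θstar w
      (Metric.mem_closedBall_self hr.le) hwball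
    rw [hgrad0, inner_zero_left, hwn] at hsc
    have hcomb := hconv.2 (Set.mem_univ θstar) (Set.mem_univ p)
      (by linarith : (0:ℝ) ≤ 1 - s) hs0.le (by ring)
    have hpt : (1-s) • θstar + s • p = w := by rw [hwdef]; module
    rw [hpt] at hcomb
    simp only [smul_eq_mul] at hcomb
    have hLp : L θstar ≤ L p := hmin p
    nlinarith [hsc, hcomb, hs1, hLp, hs0]
  have hlt : L θstar < L θstar + mu/2 * r^2 := by
    have : 0 < mu/2 * r^2 := by positivity
    linarith
  obtain ⟨T0, hT0⟩ := eventually_atTop.1 (hLto.eventually_lt_const hlt)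
  have hmem : ∀ t, T0 ≤ t → x t ∈ Metric.closedBall θstar r := by
    intro t ht
    by_contra hmemc
    have hout : r ≤ ‖x t - θstar‖ := by
      rw [Metric.mem_closedBall, dist_eq_norm, not_le] at hmemc
      linarith
    linarith [houts (x t) hout, hT0 t ht]
  set mu' := min mu (1/(2*e)) with hmu'
  have hmu'0 : 0 < mu' := lt_min hmu (by positivity)
  have hmu'le : mu' ≤ mu := min_le_left _ _
  have hmu'e : e * mu' ≤ 1/2 := by
    calc e * mu' ≤ e * (1/(2*e)) :=
          mul_le_mul_of_nonneg_left (min_le_right _ _) he0.le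
      _ = 1/2 := by field_simp
  set q := 1 - e * mu' with hqdef
  have hq0 : 0 ≤ q := by rw [hqdef]; linarith
  have hq1 : q < 1 := by
    have h := mul_pos he0 hmu'0
    rw [hqdef]; linarith
  have hPL : ∀ t, T0 ≤ t → L (x (t+1)) - L θstar ≤ q * (L (x t) - L θstar) := by
    intro t ht
    have hsc := sc_ineq hf hg1 hmu.le θstar hball (x t) θstar (hmem t ht)
      (Metric.mem_closedBall_self hr.le)
    have hi : -(‖gradient L (x t)‖ * ‖θstar - x t‖) ≤ ⟪gradient L (x t), θstar - x t⟫ := by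
      have := abs_real_inner_le_norm (gradient L (x t)) (θstar - x t)
      linarith [neg_abs_le ⟪gradient L (x t), θstar - x t⟫]
    have h1 : 2 * mu * (L (x t) - L θstar) ≤ ‖gradient L (x t)‖^2 :=
      pl_helper hmu (norm_nonneg _) (by linarith [hsc]) hi
    have hnn : 0 ≤ L (x t) - L θstar := by linarith [hmin (x t)]
    have h2 : 2 * mu' * (L (x t) - L θstar) ≤ ‖gradient L (x t)‖^2 :=
      mono_helper h1 hmu'le hnn
    have h3 := hdesc t
    have h4 := mul_le_mul_of_nonneg_left h2 (by linarith : (0:ℝ) ≤ e/2)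
    rw [hqdef]
    exact pl_step_helper h3 h4
  have hgeo : ∀ k, L (x (T0 + k)) - L θstar ≤ q^k * (L (x T0) - L θstar) := by
    intro k; induction k with
    | zero => simp
    | succ n ih =>
        have hstep' := hPL (T0 + n) (Nat.le_add_right _ _)
        calc L (x (T0 + (n+1))) - L θstar
            = L (x ((T0 + n) + 1)) - L θstar := by rw [Nat.add_succ]
          _ ≤ q * (L (x (T0+n)) - L θstar) := hstep'
          _ ≤ q * (q^n * (L (x T0) - L θstar)) := mul_le_mul_of_nonneg_left ih hq0
          _ = q^(n+1) * (L (x T0) - L θstar) := by ring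
  set A := L (x T0) - L θstar with hA
  have hA0 : 0 ≤ A := by rw [hA]; linarith [hmin (x T0)]
  have h1q : 0 < 1 - q := by linarith
  refine ⟨(∑ s ∈ Finset.range T0, (L (x s) - L θstar)) + A / (1 - q), ?_⟩
  intro T
  have hterm0 : ∀ s, 0 ≤ L (x s) - L θstar := fun s => by linarith [hmin (x s)]
  have hmono : ∑ s ∈ Finset.range T, (L (x s) - L θstar)
      ≤ ∑ s ∈ Finset.range (T0 + T), (L (x s) - L θstar) := by
    apply Finset.sum_le_sum_of_subset_of_nonneg
    · exact Finset.range_subset_range.2 (by omega)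
    · intro i _ _; exact hterm0 i
  refine hmono.trans ?_
  rw [Finset.sum_range_add]
  have hgeosum : ∑ k ∈ Finset.range T, (L (x (T0 + k)) - L θstar) ≤ A / (1 - q) := by
    have hqsum : ∑ k ∈ Finset.range T, q^k ≤ 1/(1-q) := geom_helper hq0 hq1 T
    calc ∑ k ∈ Finset.range T, (L (x (T0 + k)) - L θstar)
        ≤ ∑ k ∈ Finset.range T, q^k * A := Finset.sum_le_sum (fun k _ => hgeo k)
      _ = (∑ k ∈ Finset.range T, q^k) * A := by rw [Finset.sum_mul]
      _ ≤ (1/(1-q)) * A := mul_le_mul_of_nonneg_right hqsum hA0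
      _ = A / (1-q) := by ring
  linarith
lemma xexp_le_one {n x : ℝ} (hn : 1 ≤ n) (hx : 0 ≤ x) : x * Real.exp (-n*x) ≤ 1 := by
  have h1 : Real.exp (-n*x) ≤ Real.exp (-x) := Real.exp_le_exp.2 (by nlinarith)
  have h2 : x * Real.exp (-x) ≤ 1 := by
    rw [Real.exp_neg, mul_inv_le_iff₀ (Real.exp_pos x), one_mul]
    linarith [Real.add_one_le_exp x]
  calc x * Real.exp (-n*x) ≤ x * Real.exp (-x) := mul_le_mul_of_nonneg_left h1 hx
    _ ≤ 1 := h2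

end aux

/-- Alrao convergence theorem (full-batch, convex case). -/
theorem alrao_convergence
    {d : ℕ} (Ndata : ℕ) (hNdata : 0 < Ndata)
    (ℓi : Fin Ndata → EuclideanSpace ℝ (Fin d) → ℝ)
    (hℓi : ∀ i θ, 0 ≤ ℓi i θ)
    (L : EuclideanSpace ℝ (Fin d) → ℝ)
    (hL : ∀ θ, L θ = (1 / (Ndata : ℝ)) * ∑ i, ℓi i θ)
    (hconv : ConvexOn ℝ Set.univ L)
    (hC2 : ContDiff ℝ 2 L)
    (lam : ℝ) (hlam : 0 < lam)
    (hlip : LipschitzWith (Real.toNNReal lam) (gradient L))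
    (θstar : EuclideanSpace ℝ (Fin d)) (Lstar : ℝ)
    (hmin : ∀ θ, L θstar ≤ L θ) (hLstar : L θstar = Lstar)
    (hposdef : ∀ v : EuclideanSpace ℝ (Fin d), v ≠ 0 →
      0 < ⟪(fderiv ℝ (gradient L) θstar) v, v⟫)
    (N : ℕ) (η : Fin N → ℝ) (hη0 : ∀ j, 0 < η j)
    (j0 : Fin N) (hη1 : η j0 < 1 / lam)
    (θ : Fin N → ℕ → EuclideanSpace ℝ (Fin d))
    (hstep : ∀ j t, θ j (t + 1) = θ j t - η j • gradient L (θ j t))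
    (a : ℕ → Fin N → ℝ)
    (ha : ∀ t j, a t j =
      Real.exp (-(Ndata : ℝ) * ∑ s ∈ Finset.Icc 1 t, L (θ j s)) /
        ∑ k, Real.exp (-(Ndata : ℝ) * ∑ s ∈ Finset.Icc 1 t, L (θ k s)))
    (Lalrao : ℕ → ℝ)
    (hLalrao : ∀ t, Lalrao t =
      (1 / (Ndata : ℝ)) * ∑ i,
        -Real.log (∑ j, a t j * Real.exp (-(ℓi i (θ j t))))) :
    Filter.limsup Lalrao atTop ≤ Lstar := by
  subst hLstar
  classical
  have hNpos : (0:ℝ) < (Ndata:ℝ) := by exact_mod_cast hNdata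
  have hN1 : (1:ℝ) ≤ (Ndata:ℝ) := by exact_mod_cast hNdata
  have hLmin : ∀ p, 0 ≤ L p - L θstar := fun p => by linarith [hmin p]
  -- Part 1: summability of excess losses along the good learning rate
  have hsum : ∃ C : ℝ, ∀ T : ℕ, ∑ s ∈ Finset.range T, (L (θ j0 s) - L θstar) ≤ C := by
    rcases subsingleton_or_nontrivial (EuclideanSpace ℝ (Fin d)) with hsub | hnt
    · refine ⟨0, fun T => ?_⟩
      have hz : ∀ s, L (θ j0 s) - L θstar = 0 := fun s => by
        rw [Subsingleton.elim (θ j0 s) θstar]; ring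
      simp [hz]
    · exact gd_summable hconv hC2 hlam hlip hmin hposdef (hη0 j0) hη1 (θ j0) (hstep j0)
  obtain ⟨C, hC⟩ := hsum
  set n : ℝ := (Ndata : ℝ) with hn
  set S : Fin N → ℕ → ℝ := fun j t => ∑ s ∈ Finset.Icc 1 t, L (θ j s) with hSdef
  set Ee : Fin N → ℕ → ℝ := fun j t => ∑ s ∈ Finset.Icc 1 t, (L (θ j s) - L θstar) with hEedef
  have ha' : ∀ t j, a t j =
      Real.exp (-n * S j t) / ∑ k, Real.exp (-n * S k t) := by
    intro t j; simp only [hSdef, hn]; exact ha t j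
  have hEnonneg : ∀ j t, 0 ≤ Ee j t := fun j t =>
    Finset.sum_nonneg fun s _ => hLmin _
  have hEmono : ∀ j, Monotone (Ee j) := by
    intro j t t' htt
    apply Finset.sum_le_sum_of_subset_of_nonneg
    · exact Finset.Icc_subset_Icc_right htt
    · intro i _ _; exact hLmin _
  have hECbound : ∀ t, Ee j0 t ≤ C := by
    intro t
    have hsub : Finset.Icc 1 t ⊆ Finset.range (t+1) := by
      intro s hs; rw [Finset.mem_range]; exact Nat.lt_succ_of_le (Finset.mem_Icc.1 hs).2
    calc Ee j0 t ≤ ∑ s ∈ Finset.range (t+1), (L (θ j0 s) - L θstar) :=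
          Finset.sum_le_sum_of_subset_of_nonneg hsub (fun i _ _ => hLmin _)
      _ ≤ C := hC (t+1)
  have hSE : ∀ j t, S j t - S j0 t = Ee j t - Ee j0 t := by
    intro j t
    have h1 : ∀ jj : Fin N, Ee jj t = S jj t - (t:ℝ) * L θstar := by
      intro jj
      simp only [hEedef, hSdef]
      rw [Finset.sum_sub_distrib, Finset.sum_const, Nat.card_Icc]
      simp [nsmul_eq_mul]
    rw [h1 j, h1 j0]; ring
  have hdenompos : ∀ t, 0 < ∑ k, Real.exp (-n * S k t) := fun t =>
    Finset.sum_pos (fun k _ => Real.exp_pos _) ⟨j0, Finset.mem_univ j0⟩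
  have apos : ∀ t j, 0 < a t j := by
    intro t j; rw [ha']; exact div_pos (Real.exp_pos _) (hdenompos t)
  have asum : ∀ t, ∑ j, a t j = 1 := by
    intro t
    simp only [ha']
    rw [← Finset.sum_div, div_self (ne_of_gt (hdenompos t))]
  have haone : ∀ t j, a t j ≤ 1 := by
    intro t j
    have h := Finset.single_le_sum (f := fun k => a t k)
      (fun k _ => (apos t k).le) (Finset.mem_univ j)
    rw [asum t] at h; exact h
  have habound : ∀ t j, a t j ≤ Real.exp (n*C) * Real.exp (-n * Ee j t) := by
    intro t j
    have h1 : Real.exp (-n * S j0 t) ≤ ∑ k, Real.exp (-n * S k t) :=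
      Finset.single_le_sum (f := fun k => Real.exp (-n * S k t))
        (fun k _ => (Real.exp_pos _).le) (Finset.mem_univ j0)
    have h2 : a t j ≤ Real.exp (-n * S j t) / Real.exp (-n * S j0 t) := by
      rw [ha']
      exact div_le_div_of_nonneg_left (Real.exp_pos _).le (Real.exp_pos _) h1
    rw [← Real.exp_sub] at h2
    have h4 := hSE j t
    have h3 : -n * S j t - -n * S j0 t = -n * (Ee j t - Ee j0 t) := by
      calc -n * S j t - -n * S j0 t = -n * (S j t - S j0 t) := by ring
        _ = -n * (Ee j t - Ee j0 t) := by rw [h4]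
    rw [h3] at h2
    have h5 : n * Ee j0 t ≤ n * C := mul_le_mul_of_nonneg_left (hECbound t) hNpos.le
    calc a t j ≤ Real.exp (-n * (Ee j t - Ee j0 t)) := h2
      _ ≤ Real.exp (n*C + -n * Ee j t) := by
          apply Real.exp_le_exp.2
          have : -n * (Ee j t - Ee j0 t) = -n * Ee j t + n * Ee j0 t := by ring
          rw [this]; linarith
      _ = Real.exp (n*C) * Real.exp (-n * Ee j t) := by rw [Real.exp_add]
  -- Jensen
  have hjensen : ∀ t, Lalrao t ≤ ∑ j, a t j * L (θ j t) := by
    intro t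
    rw [hLalrao t]
    have hper : ∀ i, -Real.log (∑ j, a t j * Real.exp (-(ℓi i (θ j t))))
        ≤ ∑ j, a t j * ℓi i (θ j t) := by
      intro i
      have hcc : ConcaveOn ℝ (Set.Ioi 0) Real.log := strictConcaveOn_log_Ioi.concaveOn
      have hkey := hcc.le_map_sum (t := Finset.univ)
        (w := fun j => a t j) (p := fun j => Real.exp (-(ℓi i (θ j t))))
        (fun j _ => (apos t j).le) (asum t) (fun j _ => Real.exp_pos _)
      simp only [smul_eq_mul, Real.log_exp] at hkey
      have hneg : -(∑ j, a t j * ℓi i (θ j t)) = ∑ j, a t j * -(ℓi i (θ j t)) := by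
        rw [← Finset.sum_neg_distrib]
        apply Finset.sum_congr rfl; intro j _; ring
      linarith [hkey, hneg ▸ hkey]
    calc (1/n) * ∑ i, -Real.log (∑ j, a t j * Real.exp (-(ℓi i (θ j t))))
        ≤ (1/n) * ∑ i, ∑ j, a t j * ℓi i (θ j t) :=
          mul_le_mul_of_nonneg_left (Finset.sum_le_sum fun i _ => hper i) (by positivity)
      _ = ∑ j, a t j * L (θ j t) := by
          rw [Finset.sum_comm, Finset.mul_sum]
          apply Finset.sum_congr rfl
          intro j _
          rw [hL (θ j t), ← Finset.mul_sum]
          ring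
  -- nonnegativity of the mixture loss
  have hmix_pos : ∀ t i, 0 < ∑ j, a t j * Real.exp (-(ℓi i (θ j t))) := fun t i =>
    Finset.sum_pos (fun j _ => mul_pos (apos t j) (Real.exp_pos _)) ⟨j0, Finset.mem_univ _⟩
  have hmix_le1 : ∀ t i, ∑ j, a t j * Real.exp (-(ℓi i (θ j t))) ≤ 1 := by
    intro t i
    calc ∑ j, a t j * Real.exp (-(ℓi i (θ j t))) ≤ ∑ j, a t j := by
          apply Finset.sum_le_sum
          intro j _
          have he1 : Real.exp (-(ℓi i (θ j t))) ≤ 1 :=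
            Real.exp_le_one_iff.2 (by linarith [hℓi i (θ j t)])
          exact mul_le_of_le_one_right (apos t j).le he1
      _ = 1 := asum t
  have hLal0 : ∀ t, 0 ≤ Lalrao t := by
    intro t
    rw [hLalrao t]
    apply mul_nonneg (by positivity)
    apply Finset.sum_nonneg
    intro i _
    have := Real.log_nonpos (hmix_pos t i).le (hmix_le1 t i)
    linarith
  -- the weighted excess terms tend to zero
  set Term : Fin N → ℕ → ℝ := fun j t => a t j * (L (θ j t) - L θstar) with hTermdef
  have hTerm_nonneg : ∀ j t, 0 ≤ Term j t := fun j t =>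
    mul_nonneg (apos t j).le (hLmin _)
  have hEdiff : ∀ j s, Ee j (s+1) = Ee j s + (L (θ j (s+1)) - L θstar) := by
    intro j s
    simp only [hEedef]
    exact Finset.sum_Icc_succ_top (Nat.le_add_left 1 s) _
  have hterm_to0 : ∀ j, Tendsto (Term j) atTop (𝓝 0) := by
    intro j
    by_cases hB : BddAbove (Set.range (Ee j))
    · have hconv' : Tendsto (Ee j) atTop (𝓝 (⨆ t, Ee j t)) :=
        tendsto_atTop_ciSup (hEmono j) hB
      have hshift : Tendsto (fun t => Ee j (t-1)) atTop (𝓝 (⨆ t, Ee j t)) :=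
        hconv'.comp (tendsto_sub_atTop_nat 1)
      have hdiff0 : Tendsto (fun t => Ee j t - Ee j (t-1)) atTop (𝓝 0) := by
        have h := hconv'.sub hshift; simpa using h
      apply tendsto_of_tendsto_of_tendsto_of_le_of_le' tendsto_const_nhds hdiff0
      · exact Eventually.of_forall (fun t => hTerm_nonneg j t)
      · rw [eventually_atTop]; refine ⟨1, fun t ht => ?_⟩
        obtain ⟨s, rfl⟩ : ∃ s, t = s + 1 := ⟨t - 1, (Nat.succ_pred_eq_of_pos ht).symm⟩
        simp only [Nat.add_sub_cancel]
        have hx0 : 0 ≤ L (θ j (s+1)) - L θstar := hLmin _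
        have h1 : Term j (s+1) ≤ 1 * (L (θ j (s+1)) - L θstar) := by
          simp only [hTermdef]
          exact mul_le_mul_of_nonneg_right (haone (s+1) j) hx0
        rw [hEdiff j s]
        simpa using h1
    · have hEtop : Tendsto (Ee j) atTop atTop :=
        tendsto_atTop_atTop_of_monotone' (hEmono j) hB
      have hshift : Tendsto (fun t => Ee j (t-1)) atTop atTop :=
        hEtop.comp (tendsto_sub_atTop_nat 1)
      have hexp0 : Tendsto (fun t => Real.exp (n*C) * Real.exp (-n * Ee j (t-1)))
          atTop (𝓝 0) := by
        have h1 : Tendsto (fun t => -n * Ee j (t-1)) atTop atBot :=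
          hshift.const_mul_atTop_of_neg (by linarith : -n < 0)
        have h2 : Tendsto (fun t => Real.exp (-n * Ee j (t-1))) atTop (𝓝 0) :=
          Real.tendsto_exp_atBot.comp h1
        have h3 := h2.const_mul (Real.exp (n*C))
        rw [mul_zero] at h3
        exact h3
      apply tendsto_of_tendsto_of_tendsto_of_le_of_le' tendsto_const_nhds hexp0
      · exact Eventually.of_forall (fun t => hTerm_nonneg j t)
      · rw [eventually_atTop]; refine ⟨1, fun t ht => ?_⟩
        obtain ⟨s, rfl⟩ : ∃ s, t = s + 1 := ⟨t - 1, (Nat.succ_pred_eq_of_pos ht).symm⟩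
        simp only [Nat.add_sub_cancel]
        set x := L (θ j (s+1)) - L θstar with hxdef
        have hx0 : 0 ≤ x := hLmin _
        have h1 : Term j (s+1) ≤ (Real.exp (n*C) * Real.exp (-n * Ee j (s+1))) * x := by
          simp only [hTermdef]
          exact mul_le_mul_of_nonneg_right (habound (s+1) j) hx0
        have h2 : Real.exp (-n * Ee j (s+1)) = Real.exp (-n * Ee j s) * Real.exp (-n * x) := by
          rw [← Real.exp_add]; congr 1; rw [hEdiff j s, ← hxdef]; ring
        have h3 : x * Real.exp (-n * x) ≤ 1 := xexp_le_one hN1 hx0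
        calc Term j (s+1)
            ≤ (Real.exp (n*C) * (Real.exp (-n * Ee j s) * Real.exp (-n*x))) * x := by
              rw [← h2]; exact h1
          _ = Real.exp (n*C) * Real.exp (-n * Ee j s) * (x * Real.exp (-n*x)) := by ring
          _ ≤ Real.exp (n*C) * Real.exp (-n * Ee j s) * 1 :=
              mul_le_mul_of_nonneg_left h3 (by positivity)
          _ = Real.exp (n*C) * Real.exp (-n * Ee j s) := by ring
  have hsumterm : Tendsto (fun t => ∑ j, Term j t) atTop (𝓝 0) := by
    have h := tendsto_finset_sum (Finset.univ : Finset (Fin N))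
      (fun j _ => hterm_to0 j)
    simpa using h
  have hub : ∀ t, Lalrao t ≤ L θstar + ∑ j, Term j t := by
    intro t
    have h1 := hjensen t
    have h2 : ∑ j, a t j * L (θ j t) = L θstar + ∑ j, Term j t := by
      simp only [hTermdef]
      calc ∑ j, a t j * L (θ j t)
          = ∑ j, (a t j * L θstar + a t j * (L (θ j t) - L θstar)) := by
            apply Finset.sum_congr rfl; intro j _; ring
        _ = (∑ j, a t j * L θstar) + ∑ j, a t j * (L (θ j t) - L θstar) :=
            Finset.sum_add_distrib
        _ = L θstar + ∑ j, a t j * (L (θ j t) - L θstar) := by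
            rw [← Finset.sum_mul, asum t, one_mul]
    linarith
  have hhten : Tendsto (fun t => L θstar + ∑ j, Term j t) atTop (𝓝 (L θstar)) := by
    have h := (tendsto_const_nhds (x := L θstar) (f := atTop (α := ℕ))).add hsumterm
    simpa using h
  have hcob : Filter.IsCoboundedUnder (· ≤ ·) atTop Lalrao :=
    (Filter.isBoundedUnder_of ⟨0, fun t => hLal0 t⟩ :
      Filter.IsBoundedUnder (· ≥ ·) atTop Lalrao).isCoboundedUnder_le
  have hbd : Filter.IsBoundedUnder (· ≤ ·) atTop (fun t => L θstar + ∑ j, Term j t) :=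
    hhten.isBoundedUnder_le
  calc Filter.limsup Lalrao atTop
      ≤ Filter.limsup (fun t => L θstar + ∑ j, Term j t) atTop :=
        Filter.limsup_le_limsup (Eventually.of_forall hub) hcob hbd
    _ = L θstar := hhten.limsup_eq
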